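/- arXiv:2401.04401 — 7 statements merged into one kernel-verified Lean document; each statement's English description precedes it below -/
import Mathlib

section
/- Let Ω ⊂ ℍₛⁿ, let f : Ω → ℍ be path-slice with path-slice stem function F, let γ ∈ 𝒫(ℂⁿ, Ω), and let I, J ∈ 𝕊(Ω, γ) with I ≠ J. Then F(γ) = ((1, I), (1, J))⁻¹ · (f(γ^I(1)), f(γ^J(1)))ᵀ. -/
noncomputable section
open Quaternion Matrix

abbrev Hq := Quaternion ℝ

/-- The set of quaternionic imaginary units. -/
def Sph : Set Hq := {I | I ^ 2 = -1}

/-- `Ψ_i^I` applied to a single complex number: `x + y i ↦ x + y I`. -/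
def psi (I : Hq) (z : ℂ) : Hq := (z.re : Hq) + z.im • I

/-- `Ψ_i^I : ℂⁿ → ℂ_Iⁿ`, componentwise. -/
def liftMap {n : ℕ} (I : Hq) (z : Fin n → ℂ) : Fin n → Hq := fun k => psi I (z k)

/-- The weakly slice cone `Hqₛⁿ = ⋃_{I∈𝕊} ℂ_Iⁿ`. -/
def HSn (n : ℕ) : Set (Fin n → Hq) := {q | ∃ I ∈ Sph, ∃ z : Fin n → ℂ, q = liftMap I z}

/-- A point of `ℂⁿ` is real. -/
def isRealPt {n : ℕ} (z : Fin n → ℂ) : Prop := ∀ k, (z k).im = 0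

/-- A point of `Hqⁿ` is real. -/
def isRealH {n : ℕ} (q : Fin n → Hq) : Prop := ∀ k, q k = ((q k).re : Hq)

/-- The lifted path `γ^I = Ψ_i^I ∘ γ`. -/
def liftP {n : ℕ} (γ : C(unitInterval, Fin n → ℂ)) (I : Hq) (t : unitInterval) : Fin n → Hq :=
  liftMap I (γ t)

/-- `𝕊(Ω, γ) = {I ∈ 𝕊 : γ^I ⊂ Ω}`. -/
def SUnits {n : ℕ} (Ω : Set (Fin n → Hq)) (γ : C(unitInterval, Fin n → ℂ)) : Set Hq :=
  {I | I ∈ Sph ∧ ∀ t, liftP γ I t ∈ Ω}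

/-- `𝒫(ℂⁿ, Ω)`: continuous paths starting in `ℝⁿ` with some lift inside `Ω`. -/
def PathsTo {n : ℕ} (Ω : Set (Fin n → Hq)) : Set C(unitInterval, Fin n → ℂ) :=
  {γ | isRealPt (γ 0) ∧ ∃ I, I ∈ SUnits Ω γ}

/-- `F` is a path-slice stem function of `f` on `Ω`:
`f(γ^I(1)) = (1, I)·F(γ)`. -/
def IsStem {n : ℕ} (Ω : Set (Fin n → Hq)) (f : (Fin n → Hq) → Hq)
    (F : C(unitInterval, Fin n → ℂ) → Fin 2 → Hq) : Prop :=
  ∀ γ ∈ PathsTo Ω, ∀ I ∈ SUnits Ω γ, f (liftP γ I 1) = F γ 0 + I * F γ 1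

/-- `f` is path-slice on `Ω`. -/
def IsPathSlice {n : ℕ} (Ω : Set (Fin n → Hq)) (f : (Fin n → Hq) → Hq) : Prop :=
  ∃ F, IsStem Ω f F

/-- `Ω` is real-path-connected. -/
def RealPathConnected {n : ℕ} (Ω : Set (Fin n → Hq)) : Prop :=
  ∀ q ∈ Ω, ∃ γ ∈ PathsTo Ω, ∃ I ∈ SUnits Ω γ, liftP γ I 1 = q

/-- `Ω₂` is `Ω₁`-stem-preserving: (i) every path of `𝒫(ℂⁿ,Ω₁)` has at least two
units in `𝕊(Ω₂,γ)`; (ii) two paths with the same endpoint share `≠ 1` units. -/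
def StemPreserving {n : ℕ} (Ω₁ Ω₂ : Set (Fin n → Hq)) : Prop :=
  (∀ γ ∈ PathsTo Ω₁, ∃ I ∈ SUnits Ω₂ γ, ∃ J ∈ SUnits Ω₂ γ, I ≠ J) ∧
  (∀ α ∈ PathsTo Ω₁, ∀ β ∈ PathsTo Ω₁, α 1 = β 1 →
    ∀ I ∈ SUnits Ω₂ α ∩ SUnits Ω₂ β, ∃ J ∈ SUnits Ω₂ α ∩ SUnits Ω₂ β, J ≠ I)

/-- The formula `((1,I),(1,J))⁻¹ (f(γ^I(1)), f(γ^J(1)))ᵀ`. -/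
def stemFormula {n : ℕ} (f : (Fin n → Hq) → Hq) (γ : C(unitInterval, Fin n → ℂ)) (I J : Hq) :
    Fin 2 → Hq :=
  ((I - J)⁻¹ • !![I, -J; (1 : Hq), -1]).mulVec ![f (liftP γ I 1), f (liftP γ J 1)]

/-- The sub-stem function `F_{Ω₁}^f` (depends only on `Ω₂` and `f`). -/
noncomputable def subStem {n : ℕ} (Ω₂ : Set (Fin n → Hq)) (f : (Fin n → Hq) → Hq)
    (γ : C(unitInterval, Fin n → ℂ)) : Fin 2 → Hq := by
  classical
  exact if h : ∃ p : Hq × Hq, p.1 ∈ SUnits Ω₂ γ ∧ p.2 ∈ SUnits Ω₂ γ ∧ p.1 ≠ p.2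
    then stemFormula f γ h.choose.1 h.choose.2
    else 0

/-- Normalized imaginary part of a quaternion. -/
def imUnit (a : Hq) : Hq := (‖a - (a.re : Hq)‖)⁻¹ • (a - (a.re : Hq))

/-- The map `𝔍 : Hqₛⁿ → 𝕊 ∪ {0}`. -/
noncomputable def Jmap {n : ℕ} (q : Fin n → Hq) : Hq := by
  classical
  exact if h : ∃ k : Fin n, q k ≠ ((q k).re : Hq) then
    imUnit (q ((Finset.univ.filter fun k => q k ≠ ((q k).re : Hq)).min'
      ⟨h.choose, Finset.mem_filter.2 ⟨Finset.mem_univ _, h.choose_spec⟩⟩))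
  else 0

/-- Componentwise complex conjugate of a path. -/
def conjPath {n : ℕ} (γ : C(unitInterval, Fin n → ℂ)) : C(unitInterval, Fin n → ℂ) :=
  ⟨fun t k => star (γ t k),
    continuous_pi fun k => continuous_star.comp ((continuous_apply k).comp γ.continuous)⟩

/-- The point-form sub-stem function `ℱ_{Ω₁}^f : Ω₁ → Hq^{2×1}`. -/
noncomputable def pointStem {n : ℕ} (Ω₁ Ω₂ : Set (Fin n → Hq)) (f : (Fin n → Hq) → Hq)
    (q : Fin n → Hq) : Fin 2 → Hq := by
  classical
  exact if isRealH q then ![f q, 0]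
    else if h : ∃ γ, γ ∈ PathsTo Ω₁ ∧ (∀ t, liftP γ (Jmap q) t ∈ Ω₁) ∧ liftP γ (Jmap q) 1 = q
    then subStem Ω₂ f h.choose
    else 0

/-- The `*`-product of functions: `(f*g)(q) = (f(q), 𝔍(q)f(q)) · ℱ_{Ω₁}^g(q)`. -/
noncomputable def starProd {n : ℕ} (Ω₁ Ω₂ : Set (Fin n → Hq)) (f g : (Fin n → Hq) → Hq)
    (q : Fin n → Hq) : Hq :=
  f q * pointStem Ω₁ Ω₂ g q 0 + (Jmap q * f q) * pointStem Ω₁ Ω₂ g q 1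

/-- The `*`-product on `Hq^{2×1}` coming from `Hq ⊗_ℝ ℂ`. -/
def vstar (p q : Fin 2 → Hq) : Fin 2 → Hq :=
  ![p 0 * q 0 - p 1 * q 1, p 1 * q 0 + p 0 * q 1]

/-- `Ω` is slice-open: a subset of `Hqₛⁿ` all of whose slices are open. -/
def SliceOpen {n : ℕ} (Ω : Set (Fin n → Hq)) : Prop :=
  Ω ⊆ HSn n ∧ ∀ I ∈ Sph, IsOpen {z : Fin n → ℂ | liftMap I z ∈ Ω}

/-- `Ω` is slice-connected. -/
def SliceConnected {n : ℕ} (Ω : Set (Fin n → Hq)) : Prop :=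
  ∀ U V : Set (Fin n → Hq), SliceOpen U → SliceOpen V → Ω ⊆ U ∪ V →
    (Ω ∩ U).Nonempty → (Ω ∩ V).Nonempty → (Ω ∩ U ∩ V).Nonempty

/-- `Ω` is a slice-domain. -/
def SliceDomain {n : ℕ} (Ω : Set (Fin n → Hq)) : Prop :=
  SliceOpen Ω ∧ SliceConnected Ω

/-- `Ω` is self-stem-preserving. -/
def SelfStemPreserving {n : ℕ} (Ω : Set (Fin n → Hq)) : Prop :=
  RealPathConnected Ω ∧ StemPreserving Ω Ω

/-- `Ω` is open in the Euclidean subspace topology of `Hqₛⁿ`. -/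
def EuclideanOpenIn {n : ℕ} (Ω : Set (Fin n → Hq)) : Prop :=
  ∃ U : Set (Fin n → Hq), IsOpen U ∧ Ω = U ∩ HSn n

/-- `Ω` is weakly axially symmetric. -/
def WeaklyAxiallySymmetric {n : ℕ} (Ω : Set (Fin n → Hq)) : Prop :=
  ∀ (x y : Fin n → ℝ) (I : Hq), I ∈ Sph →
    (fun k => (x k : Hq) + y k • I) ∈ Ω → (fun k => (x k : Hq) - y k • I) ∈ Ω
/-- a stem function is computed from `f` by
`F(γ) = ((1,I),(1,J))⁻¹ (f(γ^I(1)), f(γ^J(1)))ᵀ` for distinct `I, J ∈ 𝕊(Ω,γ)`. -/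
theorem stem_eq_stemFormula {n : ℕ} (Ω : Set (Fin n → Hq)) (f : (Fin n → Hq) → Hq)
    (F : C(unitInterval, Fin n → ℂ) → Fin 2 → Hq) (hF : IsStem Ω f F)
    (γ : C(unitInterval, Fin n → ℂ)) (hγ : γ ∈ PathsTo Ω)
    (I J : Hq) (hI : I ∈ SUnits Ω γ) (hJ : J ∈ SUnits Ω γ) (hIJ : I ≠ J) :
    F γ = stemFormula f γ I J := by
  have hfI := hF γ hγ I hI
  have hfJ := hF γ hγ J hJ
  have hI2' : I * I = -1 := by rw [← sq]; exact hI.1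
  have hJ2' : J * J = -1 := by rw [← sq]; exact hJ.1
  have hne : I - J ≠ 0 := sub_ne_zero.mpr hIJ
  have key0 : I * f (liftP γ I 1) + -J * f (liftP γ J 1) = (I - J) * F γ 0 := by
    have hJa : -J * (J * F γ 1) = F γ 1 := by
      rw [neg_mul, ← mul_assoc, hJ2']; simp
    have hIa : I * (I * F γ 1) = -F γ 1 := by
      rw [← mul_assoc, hI2', neg_one_mul]
    rw [hfI, hfJ, mul_add, mul_add, hIa, hJa]
    noncomm_ring
  have key1 : (1 : Hq) * f (liftP γ I 1) + -1 * f (liftP γ J 1) = (I - J) * F γ 1 := by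
    rw [hfI, hfJ]; noncomm_ring
  have e0 : (I - J)⁻¹ * (I * f (liftP γ I 1) + -J * f (liftP γ J 1)) = F γ 0 := by
    rw [key0, ← mul_assoc, inv_mul_cancel₀ hne, one_mul]
  have e1 : (I - J)⁻¹ * ((1 : Hq) * f (liftP γ I 1) + -1 * f (liftP γ J 1)) = F γ 1 := by
    rw [key1, ← mul_assoc, inv_mul_cancel₀ hne, one_mul]
  funext k
  fin_cases k
  · simpa [stemFormula, Matrix.mulVec, dotProduct, Fin.sum_univ_two, mul_add,
      mul_assoc] using e0.symm
  · simpa [stemFormula, Matrix.mulVec, dotProduct, Fin.sum_univ_two, mul_add,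
      mul_assoc] using e1.symm
end
end

section
/- Let Ω ⊂ ℍₛⁿ, let f : Ω → ℍ be path-slice with stem function F, and let α, β ∈ 𝒫(ℂⁿ, Ω) with α(1) = β(1). If 𝕊(Ω, α) ∩ 𝕊(Ω, β) contains at least two elements, then F(α) = F(β). -/
noncomputable section
open Quaternion Matrix

/-- if `α(1) = β(1)` and `𝕊(Ω,α) ∩ 𝕊(Ω,β)` has at least two elements,
then `F(α) = F(β)` for any stem function `F` of a path-slice `f`. -/
theorem stem_coincide_of_same_endpoint {n : ℕ} (Ω : Set (Fin n → Hq))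
    (f : (Fin n → Hq) → Hq) (F : C(unitInterval, Fin n → ℂ) → Fin 2 → Hq)
    (hF : IsStem Ω f F) (α β : C(unitInterval, Fin n → ℂ))
    (hα : α ∈ PathsTo Ω) (hβ : β ∈ PathsTo Ω) (hend : α 1 = β 1)
    (I J : Hq) (hI : I ∈ SUnits Ω α ∩ SUnits Ω β) (hJ : J ∈ SUnits Ω α ∩ SUnits Ω β)
    (hIJ : I ≠ J) :
    F α = F β := by
  have hAI := hF α hα I hI.1
  have hAJ := hF α hα J hJ.1
  have hBI := hF β hβ I hI.2
  have hBJ := hF β hβ J hJ.2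
  have hl : ∀ K : Hq, liftP α K 1 = liftP β K 1 := by
    intro K; unfold liftP; rw [hend]
  rw [hl I] at hAI; rw [hl J] at hAJ
  have e1 : F α 0 + I * F α 1 = F β 0 + I * F β 1 := hAI.symm.trans hBI
  have e2 : F α 0 + J * F α 1 = F β 0 + J * F β 1 := hAJ.symm.trans hBJ
  have h5 : (I - J) * (F α 1 - F β 1) =
      ((F α 0 + I * F α 1) - (F α 0 + J * F α 1)) -
      ((F β 0 + I * F β 1) - (F β 0 + J * F β 1)) := by noncomm_ring
  rw [e1, e2, sub_self] at h5
  have h6 : F α 1 = F β 1 :=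
    sub_eq_zero.mp ((mul_eq_zero.mp h5).resolve_left (sub_ne_zero.mpr hIJ))
  have h7 : F α 0 = F β 0 := by
    have := e1
    rw [h6] at this
    exact add_right_cancel this
  funext k
  fin_cases k
  · exact h7
  · exact h6
end
end

section
/- Let Ω₁ ⊂ ℍₛⁿ be real-path-connected, Ω₂ ⊂ ℍₛⁿ be Ω₁-stem-preserving, and f : Ω₂ → ℍ path-slice. Then the formula F_{Ω₁}^f(γ) := ((1, I), (1, J))⁻¹ · (f(γ^I(1)), f(γ^J(1)))ᵀ, for any distinct I, J ∈ 𝕊(Ω₂, γ), is independent of the choice of I and J, hence defines a function F_{Ω₁}^f : 𝒫(ℂⁿ, Ω₁) → ℍ^{2×1}. -/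
noncomputable section
open Quaternion Matrix

lemma stemFormula_eq {n : ℕ} (Ω₂ : Set (Fin n → Hq))
    (f : (Fin n → Hq) → Hq) (F : C(unitInterval, Fin n → ℂ) → Fin 2 → Hq)
    (hF : IsStem Ω₂ f F)
    (γ : C(unitInterval, Fin n → ℂ)) (hγ : γ ∈ PathsTo Ω₂)
    (K L : Hq) (hK : K ∈ SUnits Ω₂ γ) (hL : L ∈ SUnits Ω₂ γ) (hKL : K ≠ L) :
    stemFormula f γ K L = ![F γ 0, F γ 1] := by
  have hK2 : K * K = -1 := by rw [← sq]; exact hK.1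
  have hL2 : L * L = -1 := by rw [← sq]; exact hL.1
  have hne : K - L ≠ 0 := sub_ne_zero.mpr hKL
  have e1 := hF γ hγ K hK
  have e2 := hF γ hγ L hL
  funext i
  simp only [stemFormula, Matrix.mulVec, dotProduct, Fin.sum_univ_two,
    Matrix.smul_apply]
  fin_cases i
  · show (K - L)⁻¹ • !![K, -L; (1 : Hq), -1] 0 0 * f (liftP γ K 1)
        + (K - L)⁻¹ • !![K, -L; (1 : Hq), -1] 0 1 * f (liftP γ L 1) = F γ 0
    rw [e1, e2]
    simp only [Matrix.cons_val', Matrix.cons_val_zero, Matrix.cons_val_one,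
      Matrix.head_cons, Matrix.empty_val', Matrix.cons_val_fin_one, smul_eq_mul]
    calc (K - L)⁻¹ * K * (F γ 0 + K * F γ 1) + (K - L)⁻¹ * -L * (F γ 0 + L * F γ 1)
        = (K - L)⁻¹ * ((K - L) * F γ 0 + (K * K - L * L) * F γ 1) := by noncomm_ring
      _ = F γ 0 := by
          rw [hK2, hL2]; simp [← mul_assoc, inv_mul_cancel₀ hne]
  · show (K - L)⁻¹ • !![K, -L; (1 : Hq), -1] 1 0 * f (liftP γ K 1)
        + (K - L)⁻¹ • !![K, -L; (1 : Hq), -1] 1 1 * f (liftP γ L 1) = F γ 1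
    rw [e1, e2]
    simp only [Matrix.cons_val', Matrix.cons_val_zero, Matrix.cons_val_one,
      Matrix.head_cons, Matrix.empty_val', Matrix.cons_val_fin_one, smul_eq_mul]
    calc (K - L)⁻¹ * 1 * (F γ 0 + K * F γ 1) + (K - L)⁻¹ * -1 * (F γ 0 + L * F γ 1)
        = (K - L)⁻¹ * ((K - L) * F γ 1) := by noncomm_ring
      _ = F γ 1 := by rw [← mul_assoc, inv_mul_cancel₀ hne, one_mul]

/-- the formula defining the sub-stem function `F_{Ω₁}^f` is
independent of the choice of distinct `I, J ∈ 𝕊(Ω₂, γ)`, hence well-defined. -/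
theorem subStem_well_defined {n : ℕ} (Ω₁ Ω₂ : Set (Fin n → Hq))
    (h₁ : RealPathConnected Ω₁) (h₂ : StemPreserving Ω₁ Ω₂)
    (f : (Fin n → Hq) → Hq) (hf : IsPathSlice Ω₂ f)
    (γ : C(unitInterval, Fin n → ℂ)) (hγ : γ ∈ PathsTo Ω₁)
    (I J I' J' : Hq) (hI : I ∈ SUnits Ω₂ γ) (hJ : J ∈ SUnits Ω₂ γ)
    (hI' : I' ∈ SUnits Ω₂ γ) (hJ' : J' ∈ SUnits Ω₂ γ)
    (hIJ : I ≠ J) (hIJ' : I' ≠ J') :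
    stemFormula f γ I J = stemFormula f γ I' J' ∧
    subStem Ω₂ f γ = stemFormula f γ I J := by
  obtain ⟨F, hF⟩ := hf
  have hγ₂ : γ ∈ PathsTo Ω₂ := ⟨hγ.1, I, hI⟩
  have key : ∀ K L : Hq, K ∈ SUnits Ω₂ γ → L ∈ SUnits Ω₂ γ → K ≠ L →
      stemFormula f γ K L = ![F γ 0, F γ 1] :=
    fun K L hK hL hKL => stemFormula_eq Ω₂ f F hF γ hγ₂ K L hK hL hKL
  have h1 : stemFormula f γ I J = ![F γ 0, F γ 1] := key I J hI hJ hIJ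
  refine ⟨by rw [h1, key I' J' hI' hJ' hIJ'], ?_⟩
  have hex : ∃ p : Hq × Hq, p.1 ∈ SUnits Ω₂ γ ∧ p.2 ∈ SUnits Ω₂ γ ∧ p.1 ≠ p.2 :=
    ⟨(I, J), hI, hJ, hIJ⟩
  rw [subStem, dif_pos hex, h1]
  exact key _ _ hex.choose_spec.1 hex.choose_spec.2.1 hex.choose_spec.2.2
end
end

section
/- With Ω₁ real-path-connected, Ω₂ Ω₁-stem-preserving, and f : Ω₂ → ℍ path-slice: if F is any path-slice stem function of f, then F_{Ω₁}^f coincides with the restriction of F to 𝒫(ℂⁿ, Ω₁). -/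
noncomputable section
open Quaternion Matrix

/-- `F_{Ω₁}^f` coincides with the restriction to `𝒫(ℂⁿ,Ω₁)` of any
path-slice stem function `F` of `f`. -/
theorem subStem_eq_stem_restriction {n : ℕ} (Ω₁ Ω₂ : Set (Fin n → Hq))
    (h₁ : RealPathConnected Ω₁) (h₂ : StemPreserving Ω₁ Ω₂)
    (f : (Fin n → Hq) → Hq) (F : C(unitInterval, Fin n → ℂ) → Fin 2 → Hq)
    (hF : IsStem Ω₂ f F) :
    ∀ γ ∈ PathsTo Ω₁, subStem Ω₂ f γ = F γ := by
  intro γ hγ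
  obtain ⟨I, hI, J, hJ, hIJ⟩ := h₂.1 γ hγ
  have hγ₂ : γ ∈ PathsTo Ω₂ := ⟨hγ.1, I, hI⟩
  have key : ∀ I' ∈ SUnits Ω₂ γ, ∀ J' ∈ SUnits Ω₂ γ, I' ≠ J' →
      stemFormula f γ I' J' = F γ := by
    intro I' hI' J' hJ' hne
    have ha : f (liftP γ I' 1) = F γ 0 + I' * F γ 1 := hF γ hγ₂ I' hI'
    have hb : f (liftP γ J' 1) = F γ 0 + J' * F γ 1 := hF γ hγ₂ J' hJ'
    have hI2 : I' * I' = -1 := by have := hI'.1; rwa [Sph, Set.mem_setOf_eq, sq] at this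
    have hJ2 : J' * J' = -1 := by have := hJ'.1; rwa [Sph, Set.mem_setOf_eq, sq] at this
    have hsub : I' - J' ≠ 0 := sub_ne_zero.2 hne
    have hcancel : ∀ x : Hq, (I' - J')⁻¹ * ((I' - J') * x) = x := fun x => by
      rw [← mul_assoc, inv_mul_cancel₀ hsub, one_mul]
    have h0 : I' * (F γ 0 + I' * F γ 1) + -J' * (F γ 0 + J' * F γ 1) = (I' - J') * F γ 0 := by
      rw [neg_mul, mul_add, mul_add, ← mul_assoc, ← mul_assoc, hI2, hJ2, sub_mul,
        neg_one_mul]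
      abel
    have h1 : (1 : Hq) * (F γ 0 + I' * F γ 1) + -1 * (F γ 0 + J' * F γ 1)
        = (I' - J') * F γ 1 := by
      rw [sub_mul, one_mul, neg_one_mul]
      abel
    funext k
    fin_cases k <;>
      simp only [stemFormula, Matrix.mulVec, dotProduct, Fin.sum_univ_two,
        Matrix.smul_apply, Matrix.cons_val', Matrix.cons_val_zero, Matrix.cons_val_one,
        Matrix.head_cons, Matrix.empty_val', Matrix.cons_val_fin_one, Matrix.head_fin_const,
        smul_eq_mul, ha, hb, Fin.isValue, Fin.mk_zero, Fin.mk_one, Matrix.of_apply]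
    · rw [mul_assoc, mul_assoc, ← mul_add, h0, hcancel]
    · rw [mul_assoc, mul_assoc, ← mul_add, h1, hcancel]
  have hex : ∃ p : Hq × Hq, p.1 ∈ SUnits Ω₂ γ ∧ p.2 ∈ SUnits Ω₂ γ ∧ p.1 ≠ p.2 :=
    ⟨(I, J), hI, hJ, hIJ⟩
  unfold subStem
  rw [dif_pos hex]
  exact key _ hex.choose_spec.1 _ hex.choose_spec.2.1 hex.choose_spec.2.2
end
end

section
/- Let Ω₁ be real-path-connected, Ω₂ Ω₁-stem-preserving, f : Ω₂ → ℍ path-slice, and γ ∈ 𝒫(ℂⁿ, Ω₁). Then F_{Ω₁}^f(γ) = diag(1, −1) · F_{Ω₁}^f(γ̄), where γ̄ is the componentwise complex conjugate path. -/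
noncomputable section
open Quaternion Matrix

lemma my_psi_conj (I : Hq) (z : ℂ) : psi (-I) (star z) = psi I z := by
  simp [psi, Complex.star_def, smul_neg]

lemma my_liftP_conj {n : ℕ} (γ : C(unitInterval, Fin n → ℂ)) (I : Hq) (t : unitInterval) :
    liftP (conjPath γ) (-I) t = liftP γ I t := by
  funext k
  simp only [liftP, liftMap, conjPath, ContinuousMap.coe_mk]
  exact my_psi_conj I (γ t k)

lemma my_sunits_neg {n : ℕ} (Ω : Set (Fin n → Hq)) (γ : C(unitInterval, Fin n → ℂ))
    {I : Hq} (hI : I ∈ SUnits Ω γ) : -I ∈ SUnits Ω (conjPath γ) := by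
  refine ⟨?_, fun t => ?_⟩
  · simpa [Sph, neg_sq] using hI.1
  · rw [my_liftP_conj]; exact hI.2 t

lemma my_stemFormula_eq {n : ℕ} (f : (Fin n → Hq) → Hq) (γ : C(unitInterval, Fin n → ℂ))
    (I J F0 F1 : Hq) (hII : I * I = -1) (hJJ : J * J = -1) (hIJ : I ≠ J)
    (hvI : f (liftP γ I 1) = F0 + I * F1) (hvJ : f (liftP γ J 1) = F0 + J * F1) :
    stemFormula f γ I J = ![F0, F1] := by
  have hne : I - J ≠ 0 := sub_ne_zero.mpr hIJ
  funext i
  fin_cases i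
  · show ((I - J)⁻¹ • !![I, -J; (1 : Hq), -1]).mulVec ![f (liftP γ I 1), f (liftP γ J 1)] 0 = F0
    simp only [Matrix.mulVec, dotProduct, Fin.sum_univ_two, Matrix.smul_apply,
      smul_eq_mul, Matrix.cons_val', Matrix.cons_val_zero, Matrix.cons_val_one, Matrix.head_cons,
      Matrix.empty_val', Matrix.cons_val_fin_one, Matrix.head_fin_const, hvI, hvJ]
    calc (I - J)⁻¹ * I * (F0 + I * F1) + (I - J)⁻¹ * -J * (F0 + J * F1)
        = (I - J)⁻¹ * (I * F0 + (I * I) * F1 - (J * F0 + (J * J) * F1)) := by noncomm_ring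
      _ = (I - J)⁻¹ * ((I - J) * F0) := by rw [hII, hJJ]; noncomm_ring
      _ = F0 := by rw [← mul_assoc, inv_mul_cancel₀ hne, one_mul]
  · show ((I - J)⁻¹ • !![I, -J; (1 : Hq), -1]).mulVec ![f (liftP γ I 1), f (liftP γ J 1)] 1 = F1
    simp only [Matrix.mulVec, dotProduct, Fin.sum_univ_two, Matrix.smul_apply,
      smul_eq_mul, Matrix.cons_val', Matrix.cons_val_zero, Matrix.cons_val_one, Matrix.head_cons,
      Matrix.empty_val', Matrix.cons_val_fin_one, Matrix.head_fin_const, hvI, hvJ]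
    calc (I - J)⁻¹ * 1 * (F0 + I * F1) + (I - J)⁻¹ * -1 * (F0 + J * F1)
        = (I - J)⁻¹ * ((I - J) * F1) := by noncomm_ring
      _ = F1 := by rw [← mul_assoc, inv_mul_cancel₀ hne, one_mul]

/-- If some stem function `F` exists and `γ` has two distinct units, `subStem` equals `F`. -/
lemma my_subStem_eq {n : ℕ} (Ω₂ : Set (Fin n → Hq)) (f : (Fin n → Hq) → Hq)
    (F : C(unitInterval, Fin n → ℂ) → Fin 2 → Hq) (hF : IsStem Ω₂ f F)
    (γ : C(unitInterval, Fin n → ℂ)) (hγ : γ ∈ PathsTo Ω₂)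
    (I J : Hq) (hI : I ∈ SUnits Ω₂ γ) (hJ : J ∈ SUnits Ω₂ γ) (hIJ : I ≠ J) :
    subStem Ω₂ f γ = ![F γ 0, F γ 1] := by
  have hex : ∃ p : Hq × Hq, p.1 ∈ SUnits Ω₂ γ ∧ p.2 ∈ SUnits Ω₂ γ ∧ p.1 ≠ p.2 :=
    ⟨(I, J), hI, hJ, hIJ⟩
  rw [subStem, dif_pos hex]
  obtain ⟨hA, hB, hAB⟩ := hex.choose_spec
  have hAA : hex.choose.1 * hex.choose.1 = -1 := by
    have := hA.1; rwa [Sph, Set.mem_setOf_eq, sq] at this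
  have hBB : hex.choose.2 * hex.choose.2 = -1 := by
    have := hB.1; rwa [Sph, Set.mem_setOf_eq, sq] at this
  exact my_stemFormula_eq f γ _ _ _ _ hAA hBB hAB (hF γ hγ _ hA) (hF γ hγ _ hB)

/-- `F_{Ω₁}^f(γ) = diag(1,−1) · F_{Ω₁}^f(γ̄)`. -/
theorem subStem_conjPath {n : ℕ} (Ω₁ Ω₂ : Set (Fin n → Hq))
    (h₁ : RealPathConnected Ω₁) (h₂ : StemPreserving Ω₁ Ω₂)
    (f : (Fin n → Hq) → Hq) (hf : IsPathSlice Ω₂ f)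
    (γ : C(unitInterval, Fin n → ℂ)) (hγ : γ ∈ PathsTo Ω₁) :
    subStem Ω₂ f γ =
      (Matrix.diagonal ![(1 : Hq), -1]).mulVec (subStem Ω₂ f (conjPath γ)) := by
  obtain ⟨F, hF⟩ := hf
  obtain ⟨I, hI, J, hJ, hIJ⟩ := h₂.1 γ hγ
  have hγ₂ : γ ∈ PathsTo Ω₂ := ⟨hγ.1, I, hI⟩
  have hγc : (conjPath γ) ∈ PathsTo Ω₂ := by
    refine ⟨fun k => ?_, -I, my_sunits_neg Ω₂ γ hI⟩
    have := hγ.1 k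
    simp only [conjPath, ContinuousMap.coe_mk, Complex.star_def, Complex.conj_im]
    simpa using congrArg Neg.neg this
  have hnIJ : (-I : Hq) ≠ -J := fun h => hIJ (neg_injective h)
  have e1 : subStem Ω₂ f γ = ![F γ 0, F γ 1] :=
    my_subStem_eq Ω₂ f F hF γ hγ₂ I J hI hJ hIJ
  have e2 : subStem Ω₂ f (conjPath γ) = ![F (conjPath γ) 0, F (conjPath γ) 1] :=
    my_subStem_eq Ω₂ f F hF (conjPath γ) hγc (-I) (-J)
      (my_sunits_neg Ω₂ γ hI) (my_sunits_neg Ω₂ γ hJ) hnIJ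
  -- relate F γ and F (conjPath γ)
  have vI : F γ 0 + I * F γ 1 = F (conjPath γ) 0 + -I * F (conjPath γ) 1 := by
    rw [← hF γ hγ₂ I hI, ← hF (conjPath γ) hγc (-I) (my_sunits_neg Ω₂ γ hI),
      my_liftP_conj]
  have vJ : F γ 0 + J * F γ 1 = F (conjPath γ) 0 + -J * F (conjPath γ) 1 := by
    rw [← hF γ hγ₂ J hJ, ← hF (conjPath γ) hγc (-J) (my_sunits_neg Ω₂ γ hJ),
      my_liftP_conj]
  have hne : I - J ≠ 0 := sub_ne_zero.mpr hIJ
  have h1 : F (conjPath γ) 1 = -F γ 1 := by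
    have key : (I - J) * (F γ 1 + F (conjPath γ) 1) = 0 := by
      have := congrArg₂ (· - ·) vI vJ
      calc (I - J) * (F γ 1 + F (conjPath γ) 1)
          = (F γ 0 + I * F γ 1 - (F γ 0 + J * F γ 1)) -
            (F (conjPath γ) 0 + -I * F (conjPath γ) 1 -
              (F (conjPath γ) 0 + -J * F (conjPath γ) 1)) := by noncomm_ring
        _ = 0 := by rw [this]; exact sub_self _
    rcases mul_eq_zero.mp key with h | h
    · exact absurd h hne
    · exact eq_neg_of_add_eq_zero_right h
  have h0 : F (conjPath γ) 0 = F γ 0 := by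
    have h' := vI
    rw [h1] at h'
    have h'' : F γ 0 = F (conjPath γ) 0 := by simpa using h'
    exact h''.symm
  rw [e1, e2, h0, h1]
  funext i
  fin_cases i <;>
    simp [Matrix.mulVec, dotProduct, Fin.sum_univ_two, Matrix.diagonal]
end
end

section
/- Let Ω₁ be real-path-connected, Ω₂ Ω₁-stem-preserving, g : Ω₂ → ℍ path-slice, c ∈ ℍ, γ ∈ 𝒫(ℂⁿ, Ω₁), I ∈ 𝕊(Ω₁, γ), and q := γ^I(1). Then (c, Ic)·F_{Ω₁}^g(γ) = (c, −Ic)·F_{Ω₁}^g(γ̄) = (c, 𝔍(q)c)·ℱ_{Ω₁}^g(q). -/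
noncomputable section
open Quaternion Matrix

/-! ### Auxiliary lemmas -/

section Aux
variable {n : ℕ}

lemma RS_sph_re {I : Hq} (hI : I ∈ Sph) : I.re = 0 := by
  have h : I ^ 2 = -1 := hI
  have h1 := congrArg QuaternionAlgebra.re h
  have h2 := congrArg QuaternionAlgebra.imI h
  have h3 := congrArg QuaternionAlgebra.imJ h
  have h4 := congrArg QuaternionAlgebra.imK h
  simp [pow_two, Quaternion.re_mul, Quaternion.imI_mul, Quaternion.imJ_mul,
    Quaternion.imK_mul] at h1 h2 h3 h4
  nlinarith [sq_nonneg I.re, sq_nonneg I.imI, sq_nonneg I.imJ, sq_nonneg I.imK]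

lemma RS_sph_norm {I : Hq} (hI : I ∈ Sph) : ‖I‖ = 1 := by
  have h : I ^ 2 = -1 := hI
  have hre := RS_sph_re hI
  have h1 := congrArg QuaternionAlgebra.re h
  simp [pow_two, Quaternion.re_mul, hre] at h1
  have h2 : ‖I‖ * ‖I‖ = 1 := by
    rw [← Quaternion.normSq_eq_norm_mul_self]
    simp [Quaternion.normSq_def', hre]; nlinarith
  nlinarith [norm_nonneg I]

lemma RS_sph_ne {I : Hq} (hI : I ∈ Sph) : I ≠ 0 := by
  intro h
  have h1 : I ^ 2 = -1 := hI
  rw [h] at h1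
  simp at h1

lemma RS_sph_neg {I : Hq} (hI : I ∈ Sph) : -I ∈ Sph := by
  have h : I ^ 2 = -1 := hI
  show (-I) ^ 2 = -1
  rw [neg_pow]; simp [h]

lemma RS_psi_re (I : Hq) (hI : I ∈ Sph) (z : ℂ) : (psi I z).re = z.re := by
  simp [psi, RS_sph_re hI]

lemma RS_psi_real {K : Hq} {z : ℂ} (hz : z.im = 0) : psi K z = (z.re : Hq) := by
  simp [psi, hz]

lemma RS_psi_inj {I : Hq} (hI : I ∈ Sph) {z w : ℂ} (h : psi I z = psi I w) : z = w := by
  have hre : z.re = w.re := by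
    have := congrArg QuaternionAlgebra.re h
    rwa [RS_psi_re I hI, RS_psi_re I hI] at this
  have him : z.im = w.im := by
    have h2 : z.im • I = w.im • I := by
      have : (z.re : Hq) + z.im • I = (w.re : Hq) + w.im • I := h
      rw [hre] at this
      exact add_left_cancel this
    have h3 : (z.im - w.im) • I = 0 := by rw [sub_smul, h2, sub_self]
    rcases smul_eq_zero.1 h3 with h4 | h4
    · exact sub_eq_zero.1 h4
    · exact absurd h4 (RS_sph_ne hI)
  exact Complex.ext hre him

lemma RS_psi_neg (K : Hq) (z : ℂ) : psi (-K) z = psi K (star z) := by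
  simp [psi, Complex.star_def, smul_neg]

lemma RS_liftP_conj (γ : C(unitInterval, Fin n → ℂ)) (K : Hq) (t : unitInterval) :
    liftP (conjPath γ) K t = liftP γ (-K) t := by
  funext k
  show psi K (star (γ t k)) = psi (-K) (γ t k)
  rw [RS_psi_neg]

lemma RS_SUnits_conj {Ω : Set (Fin n → Hq)} {γ : C(unitInterval, Fin n → ℂ)} {K : Hq} :
    K ∈ SUnits Ω (conjPath γ) ↔ -K ∈ SUnits Ω γ := by
  constructor
  · rintro ⟨h1, h2⟩
    refine ⟨RS_sph_neg h1, fun t => ?_⟩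
    have := h2 t
    rwa [RS_liftP_conj] at this
  · rintro ⟨h1, h2⟩
    have h1' : K ∈ Sph := by have := RS_sph_neg h1; rwa [neg_neg] at this
    refine ⟨h1', fun t => ?_⟩
    rw [RS_liftP_conj]
    exact h2 t

lemma RS_conj_mem {Ω : Set (Fin n → Hq)} {γ : C(unitInterval, Fin n → ℂ)}
    (h : γ ∈ PathsTo Ω) : conjPath γ ∈ PathsTo Ω := by
  obtain ⟨h0, K, hK⟩ := h
  refine ⟨fun k => ?_, -K, RS_SUnits_conj.2 (by rwa [neg_neg])⟩
  show (star (γ 0 k)).im = 0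
  simp [h0 k]

lemma RS_pair {Ω₁ Ω₂ : Set (Fin n → Hq)} (h₂ : StemPreserving Ω₁ Ω₂)
    {γ : C(unitInterval, Fin n → ℂ)} (hγ : γ ∈ PathsTo Ω₁) :
    ∃ p : Hq × Hq, p.1 ∈ SUnits Ω₂ γ ∧ p.2 ∈ SUnits Ω₂ γ ∧ p.1 ≠ p.2 := by
  obtain ⟨I, hI, J, hJ, hne⟩ := h₂.1 γ hγ
  exact ⟨(I, J), hI, hJ, hne⟩

lemma RS_subStem_eq {Ω₂ : Set (Fin n → Hq)} (g : (Fin n → Hq) → Hq)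
    {γ : C(unitInterval, Fin n → ℂ)} (A B : Hq)
    (hex : ∃ p : Hq × Hq, p.1 ∈ SUnits Ω₂ γ ∧ p.2 ∈ SUnits Ω₂ γ ∧ p.1 ≠ p.2)
    (hval : ∀ K ∈ SUnits Ω₂ γ, g (liftP γ K 1) = A + K * B) :
    subStem Ω₂ g γ = ![A, B] := by
  unfold subStem
  rw [dif_pos hex]
  obtain ⟨hI, hJ, hne⟩ := hex.choose_spec
  set I := hex.choose.1 with hIdef
  set J := hex.choose.2 with hJdef
  have hI2 : I * I = -1 := by have : I ^ 2 = -1 := hI.1; rwa [pow_two] at this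
  have hJ2 : J * J = -1 := by have : J ^ 2 = -1 := hJ.1; rwa [pow_two] at this
  have hIJ : (I - J)⁻¹ * (I - J) = 1 := inv_mul_cancel₀ (sub_ne_zero.2 hne)
  unfold stemFormula
  rw [hval _ hI, hval _ hJ]
  funext k
  fin_cases k <;>
    simp [Matrix.mulVec, dotProduct, Fin.sum_univ_two, Matrix.smul_apply, smul_eq_mul,
      mul_add, mul_assoc]
  · have key : ∀ X Y Z W : Hq, (I-J)⁻¹ * X + (I-J)⁻¹ * Y + (-((I-J)⁻¹ * Z) + -((I-J)⁻¹ * W))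
        = (I-J)⁻¹ * (X + Y - Z - W) := by intros; noncomm_ring
    rw [key]
    have e1 : I * (I * B) = -B := by rw [← mul_assoc, hI2, neg_one_mul]
    have e2 : J * (J * B) = -B := by rw [← mul_assoc, hJ2, neg_one_mul]
    rw [e1, e2, show I * A + -B - J * A - -B = (I - J) * A by noncomm_ring,
      ← mul_assoc, hIJ, one_mul]
  · have key : ∀ X Y Z W : Hq, (I-J)⁻¹ * X + (I-J)⁻¹ * Y + (-((I-J)⁻¹ * Z) + -((I-J)⁻¹ * W))
        = (I-J)⁻¹ * (X + Y - Z - W) := by intros; noncomm_ring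
    rw [key, show A + I * B - A - J * B = (I - J) * B by noncomm_ring,
      ← mul_assoc, hIJ, one_mul]

end Aux
section Aux2
variable {n : ℕ}

lemma RS_shared {Ω₁ Ω₂ : Set (Fin n → Hq)} (h₂ : StemPreserving Ω₁ Ω₂)
    {α β : C(unitInterval, Fin n → ℂ)} (hα : α ∈ PathsTo Ω₁) (hβ : β ∈ PathsTo Ω₁)
    (he : α 1 = β 1) (hsh : ∃ K, K ∈ SUnits Ω₁ α ∧ K ∈ SUnits Ω₁ β) :
    ∃ K L : Hq, (K ∈ SUnits Ω₂ α ∧ K ∈ SUnits Ω₂ β) ∧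
      (L ∈ SUnits Ω₂ α ∧ L ∈ SUnits Ω₂ β) ∧ K ≠ L := by
  classical
  set pα : Path (α 0) (α 1) := ⟨α, rfl, rfl⟩ with hpα
  set pβ : Path (β 0) (β 1) := ⟨β, rfl, rfl⟩ with hpβ
  set pβ' : Path (α 1) (β 0) := (pβ.symm).cast he rfl with hpβ'
  set μp := pα.trans pβ' with hμp
  set μ : C(unitInterval, Fin n → ℂ) := μp.toContinuousMap with hμ
  have hcoe : (⇑pβ' : unitInterval → Fin n → ℂ) = ⇑pβ.symm := Path.cast_coe _ _ _
  have hranβ' : Set.range (⇑pβ') = Set.range (⇑β) := by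
    rw [hcoe, Path.symm_range]; rfl
  have hran : ∀ t : unitInterval, (∃ s, α s = μ t) ∨ (∃ s, β s = μ t) := by
    intro t
    have h0 : μ t ∈ Set.range (⇑μp) := ⟨t, rfl⟩
    rw [hμp, Path.trans_range] at h0
    rcases h0 with h | h
    · exact Or.inl h
    · rw [hranβ'] at h; exact Or.inr h
  have hsubα : ∀ s, ∃ t, μ t = α s := by
    intro s
    have : α s ∈ Set.range (⇑μp) := by
      rw [hμp, Path.trans_range]; exact Or.inl ⟨s, rfl⟩
    obtain ⟨t, ht⟩ := this
    exact ⟨t, ht⟩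
  have hsubβ : ∀ s, ∃ t, μ t = β s := by
    intro s
    have : β s ∈ Set.range (⇑μp) := by
      rw [hμp, Path.trans_range]
      exact Or.inr (by rw [hranβ']; exact ⟨s, rfl⟩)
    obtain ⟨t, ht⟩ := this
    exact ⟨t, ht⟩
  have hμ0 : μ 0 = α 0 := μp.source
  have hμmem : μ ∈ PathsTo Ω₁ := by
    obtain ⟨K, hKα, hKβ⟩ := hsh
    refine ⟨hμ0 ▸ hα.1, K, hKα.1, fun t => ?_⟩
    rcases hran t with ⟨s, hs⟩ | ⟨s, hs⟩
    · show liftMap K (μ t) ∈ Ω₁; rw [← hs]; exact hKα.2 s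
    · show liftMap K (μ t) ∈ Ω₁; rw [← hs]; exact hKβ.2 s
  obtain ⟨K, hK, L, hL, hne⟩ := h₂.1 μ hμmem
  have conv : ∀ M : Hq, M ∈ SUnits Ω₂ μ → M ∈ SUnits Ω₂ α ∧ M ∈ SUnits Ω₂ β := by
    intro M hM
    refine ⟨⟨hM.1, fun s => ?_⟩, ⟨hM.1, fun s => ?_⟩⟩
    · obtain ⟨t, ht⟩ := hsubα s
      show liftMap M (α s) ∈ Ω₂; rw [← ht]; exact hM.2 t
    · obtain ⟨t, ht⟩ := hsubβ s
      show liftMap M (β s) ∈ Ω₂; rw [← ht]; exact hM.2 t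
  exact ⟨K, L, conv K hK, conv L hL, hne⟩

lemma RS_mem_P2 {Ω₁ Ω₂ : Set (Fin n → Hq)} (h₂ : StemPreserving Ω₁ Ω₂)
    {γ : C(unitInterval, Fin n → ℂ)} (hγ : γ ∈ PathsTo Ω₁) : γ ∈ PathsTo Ω₂ := by
  obtain ⟨I, hI, _⟩ := h₂.1 γ hγ
  exact ⟨hγ.1, I, hI⟩

lemma RS_F_eq {Ω₁ Ω₂ : Set (Fin n → Hq)} (h₂ : StemPreserving Ω₁ Ω₂)
    {g : (Fin n → Hq) → Hq} {F₀ : C(unitInterval, Fin n → ℂ) → Fin 2 → Hq}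
    (hF₀ : IsStem Ω₂ g F₀)
    {α β : C(unitInterval, Fin n → ℂ)} (hα : α ∈ PathsTo Ω₁) (hβ : β ∈ PathsTo Ω₁)
    (he : α 1 = β 1) (hsh : ∃ K, K ∈ SUnits Ω₁ α ∧ K ∈ SUnits Ω₁ β) :
    F₀ α 0 = F₀ β 0 ∧ F₀ α 1 = F₀ β 1 := by
  obtain ⟨K, L, ⟨hKα, hKβ⟩, ⟨hLα, hLβ⟩, hne⟩ := RS_shared h₂ hα hβ he hsh
  have hend : ∀ M : Hq, liftP α M 1 = liftP β M 1 := by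
    intro M; show liftMap M (α 1) = liftMap M (β 1); rw [he]
  have eqK : F₀ α 0 + K * F₀ α 1 = F₀ β 0 + K * F₀ β 1 := by
    rw [← hF₀ α (RS_mem_P2 h₂ hα) K hKα, ← hF₀ β (RS_mem_P2 h₂ hβ) K hKβ, hend]
  have eqL : F₀ α 0 + L * F₀ α 1 = F₀ β 0 + L * F₀ β 1 := by
    rw [← hF₀ α (RS_mem_P2 h₂ hα) L hLα, ← hF₀ β (RS_mem_P2 h₂ hβ) L hLβ, hend]
  have h5 : (K - L) * F₀ α 1 = (K - L) * F₀ β 1 := by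
    have h6 : F₀ α 0 + K * F₀ α 1 - (F₀ α 0 + L * F₀ α 1)
        = F₀ β 0 + K * F₀ β 1 - (F₀ β 0 + L * F₀ β 1) := by rw [eqK, eqL]
    rw [sub_mul, sub_mul]
    simpa using h6
  have hB : F₀ α 1 = F₀ β 1 := mul_left_cancel₀ (sub_ne_zero.2 hne) h5
  refine ⟨?_, hB⟩
  have := eqK
  rw [hB] at this
  exact add_right_cancel this

end Aux2
section Aux3
variable {n : ℕ}

lemma RS_imUnit {I : Hq} (hI : I ∈ Sph) {z : ℂ} (hz : z.im ≠ 0) :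
    imUnit (psi I z) = I ∨ imUnit (psi I z) = -I := by
  have hre : (psi I z).re = z.re := RS_psi_re I hI z
  have hsub : psi I z - ((psi I z).re : Hq) = z.im • I := by
    rw [hre]
    show (z.re : Hq) + z.im • I - (z.re : Hq) = z.im • I
    rw [add_sub_cancel_left]
  unfold imUnit
  rw [hsub, norm_smul, RS_sph_norm hI, mul_one, smul_smul, Real.norm_eq_abs]
  rcases lt_or_gt_of_ne hz with h | h
  · right
    rw [abs_of_neg h, inv_neg, neg_mul, inv_mul_cancel₀ hz, neg_smul, one_smul]
  · left
    rw [abs_of_pos h, inv_mul_cancel₀ hz, one_smul]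

lemma RS_Jmap {I : Hq} (hI : I ∈ Sph) (z : Fin n → ℂ) (hnr : ¬ isRealH (liftMap I z)) :
    Jmap (liftMap I z) = I ∨ Jmap (liftMap I z) = -I := by
  classical
  have hex : ∃ k : Fin n, liftMap I z k ≠ (((liftMap I z) k).re : Hq) := by
    by_contra hc
    push_neg at hc
    exact hnr fun k => hc k
  have key : ∀ k : Fin n, liftMap I z k ≠ (((liftMap I z) k).re : Hq) →
      (imUnit (liftMap I z k) = I ∨ imUnit (liftMap I z k) = -I) := by
    intro k hk
    have him : (z k).im ≠ 0 := by
      intro h0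
      refine hk ?_
      have h1 : liftMap I z k = (((z k).re : ℝ) : Hq) := RS_psi_real h0
      rw [h1]
      norm_num
    exact RS_imUnit hI him
  unfold Jmap
  rw [dif_pos hex]
  apply key
  have hmm := Finset.min'_mem
    ((Finset.univ : Finset (Fin n)).filter fun k => liftMap I z k ≠ (((liftMap I z) k).re : Hq))
    ⟨hex.choose, Finset.mem_filter.2 ⟨Finset.mem_univ _, hex.choose_spec⟩⟩
  exact (Finset.mem_filter.1 hmm).2

end Aux3
/-- `(c, Ic)·F_{Ω₁}^g(γ) = (c, −Ic)·F_{Ω₁}^g(γ̄) = (c, 𝔍(q)c)·ℱ_{Ω₁}^g(q)`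
where `q = γ^I(1)`. -/
theorem row_mul_subStem_eq {n : ℕ} (Ω₁ Ω₂ : Set (Fin n → Hq))
    (h₁ : RealPathConnected Ω₁) (h₂ : StemPreserving Ω₁ Ω₂)
    (c : Hq) (g : (Fin n → Hq) → Hq) (hg : IsPathSlice Ω₂ g)
    (γ : C(unitInterval, Fin n → ℂ)) (hγ : γ ∈ PathsTo Ω₁)
    (I : Hq) (hI : I ∈ SUnits Ω₁ γ) (q : Fin n → Hq) (hq : q = liftP γ I 1) :
    c * subStem Ω₂ g γ 0 + (I * c) * subStem Ω₂ g γ 1 =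
      c * subStem Ω₂ g (conjPath γ) 0 + (-I * c) * subStem Ω₂ g (conjPath γ) 1 ∧
    c * subStem Ω₂ g γ 0 + (I * c) * subStem Ω₂ g γ 1 =
      c * pointStem Ω₁ Ω₂ g q 0 + (Jmap q * c) * pointStem Ω₁ Ω₂ g q 1 := by
  subst hq
  obtain ⟨F₀, hF₀⟩ := hg
  have hγ2 := RS_mem_P2 h₂ hγ
  set A := F₀ γ 0 with hA
  set B := F₀ γ 1 with hB
  have hSγ : subStem Ω₂ g γ = ![A, B] :=
    RS_subStem_eq g A B (RS_pair h₂ hγ) (fun K hK => hF₀ γ hγ2 K hK)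
  have hγc : conjPath γ ∈ PathsTo Ω₁ := RS_conj_mem hγ
  have hγc2 := RS_mem_P2 h₂ hγc
  have hSγc : subStem Ω₂ g (conjPath γ) = ![A, -B] := by
    refine RS_subStem_eq g A (-B) (RS_pair h₂ hγc) (fun K hK => ?_)
    have hK' : -K ∈ SUnits Ω₂ γ := RS_SUnits_conj.1 hK
    have h1 := hF₀ γ hγ2 (-K) hK'
    have h2 : liftP (conjPath γ) K 1 = liftP γ (-K) 1 := RS_liftP_conj γ K 1
    rw [h2, h1, neg_mul, mul_neg]
  constructor
  · rw [hSγ, hSγc]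
    simp only [Matrix.cons_val_zero, Matrix.cons_val_one, Matrix.head_cons]
    noncomm_ring
  · rw [hSγ]
    simp only [Matrix.cons_val_zero, Matrix.cons_val_one, Matrix.head_cons]
    by_cases hre : isRealH (liftP γ I 1)
    · -- real endpoint case
      have hzim : ∀ k, (γ 1 k).im = 0 := by
        intro k
        have h1 : liftP γ I 1 k = ((liftP γ I 1 k).re : Hq) := hre k
        have h3 : (liftP γ I 1 k).re = (γ 1 k).re := RS_psi_re I hI.1 (γ 1 k)
        have h4 : psi I (γ 1 k) = (((γ 1 k).re : ℝ) : Hq) := by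
          rw [← h3]; exact h1
        have h5 : (γ 1 k).im • I = 0 := by
          have h6 : ((γ 1 k).re : Hq) + (γ 1 k).im • I = (((γ 1 k).re : ℝ) : Hq) := h4
          have := congrArg (fun x => x - (((γ 1 k).re : ℝ) : Hq)) h6
          simpa using this
        rcases smul_eq_zero.1 h5 with h6 | h6
        · exact h6
        · exact absurd h6 (RS_sph_ne hI.1)
      obtain ⟨K, hK, L, hL, hne⟩ := h₂.1 γ hγ
      have hq' : ∀ M : Hq, liftP γ M 1 = liftP γ I 1 := by
        intro M
        funext k
        show psi M (γ 1 k) = psi I (γ 1 k)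
        rw [RS_psi_real (hzim k), RS_psi_real (hzim k)]
      have eqK : g (liftP γ I 1) = A + K * B := by
        rw [← hq' K]; exact hF₀ γ hγ2 K hK
      have eqL : g (liftP γ I 1) = A + L * B := by
        rw [← hq' L]; exact hF₀ γ hγ2 L hL
      have hB0 : B = 0 := by
        have h5 : (K - L) * B = 0 := by
          rw [sub_mul]
          have h6 : A + K * B - (A + L * B) = 0 := by rw [← eqK, ← eqL, sub_self]
          simpa using h6
        exact (mul_eq_zero.1 h5).resolve_left (sub_ne_zero.2 hne)
      have hA0 : A = g (liftP γ I 1) := by rw [eqK, hB0, mul_zero, add_zero]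
      unfold pointStem
      rw [if_pos hre]
      simp [hB0, hA0]
    · -- non-real endpoint case
      have hJ : Jmap (liftP γ I 1) = I ∨ Jmap (liftP γ I 1) = -I :=
        RS_Jmap hI.1 (γ 1) hre
      have hEx : ∃ δ, δ ∈ PathsTo Ω₁ ∧ (∀ t, liftP δ (Jmap (liftP γ I 1)) t ∈ Ω₁) ∧
          liftP δ (Jmap (liftP γ I 1)) 1 = liftP γ I 1 := by
        rcases hJ with hJ | hJ
        · exact ⟨γ, hγ, fun t => by rw [hJ]; exact hI.2 t, by rw [hJ]⟩
        · refine ⟨conjPath γ, hγc, fun t => ?_, ?_⟩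
          · rw [hJ, RS_liftP_conj, neg_neg]; exact hI.2 t
          · rw [hJ, RS_liftP_conj, neg_neg]
      unfold pointStem
      rw [if_neg hre, dif_pos hEx]
      obtain ⟨hδP, hδΩ, hδ1⟩ := hEx.choose_spec
      set δ := hEx.choose with hδdef
      rcases hJ with hJ | hJ
      · have hδe : δ 1 = γ 1 := by
          funext k
          refine RS_psi_inj hI.1 ?_
          have h1 := congrFun hδ1 k
          rw [hJ] at h1
          exact h1
        have hsh : ∃ K, K ∈ SUnits Ω₁ δ ∧ K ∈ SUnits Ω₁ γ :=
          ⟨I, ⟨hI.1, by rw [← hJ]; exact hδΩ⟩, hI⟩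
        have hFeq := RS_F_eq h₂ hF₀ hδP hγ hδe hsh
        have hSδ : subStem Ω₂ g δ = ![A, B] := by
          refine RS_subStem_eq g A B (RS_pair h₂ hδP) (fun K hK => ?_)
          rw [hF₀ δ (RS_mem_P2 h₂ hδP) K hK, hFeq.1, hFeq.2]
        rw [hSδ, hJ]
        simp only [Matrix.cons_val_zero, Matrix.cons_val_one, Matrix.head_cons]
      · have hδe : δ 1 = (conjPath γ) 1 := by
          funext k
          have h1 := congrFun hδ1 k
          rw [hJ] at h1
          have h2 : psi I (star (δ 1 k)) = psi I (γ 1 k) := by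
            rw [← RS_psi_neg]; exact h1
          have h3 := RS_psi_inj hI.1 h2
          show δ 1 k = star (γ 1 k)
          rw [← h3, star_star]
        have hsh : ∃ K, K ∈ SUnits Ω₁ δ ∧ K ∈ SUnits Ω₁ (conjPath γ) :=
          ⟨-I, ⟨RS_sph_neg hI.1, by rw [← hJ]; exact hδΩ⟩,
            RS_SUnits_conj.2 (by rwa [neg_neg])⟩
        have hFeq := RS_F_eq h₂ hF₀ hδP hγc hδe hsh
        have hSγc' : subStem Ω₂ g (conjPath γ) = ![F₀ (conjPath γ) 0, F₀ (conjPath γ) 1] :=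
          RS_subStem_eq g _ _ (RS_pair h₂ hγc) (fun K hK => hF₀ _ hγc2 K hK)
        have hv := hSγc'.symm.trans hSγc
        have hc0 : F₀ (conjPath γ) 0 = A := by have := congrFun hv 0; simpa using this
        have hc1 : F₀ (conjPath γ) 1 = -B := by have := congrFun hv 1; simpa using this
        have hSδ : subStem Ω₂ g δ = ![A, -B] := by
          refine RS_subStem_eq g A (-B) (RS_pair h₂ hδP) (fun K hK => ?_)
          rw [hF₀ δ (RS_mem_P2 h₂ hδP) K hK, hFeq.1, hFeq.2, hc0, hc1]
        rw [hSδ, hJ]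
        simp only [Matrix.cons_val_zero, Matrix.cons_val_one, Matrix.head_cons]
        noncomm_ring
end
end

section
/- Let Ω ⊂ ℍₛⁿ be a slice-domain (slice-open and slice-connected in the slice topology) with Ω ∩ ℝⁿ ≠ ∅. Then Ω is real-path-connected: for every q ∈ Ω there exist γ ∈ 𝒫(ℂⁿ, Ω) and I ∈ 𝕊(Ω, γ) with γ^I(1) = q. -/
noncomputable section
open Quaternion Matrix

-- helpers
lemma sph_norm {I : Hq} (h : I ∈ Sph) : ‖I‖ = 1 := by
  have : ‖I‖ * ‖I‖ = 1 := by rw [← norm_mul, ← sq, h]; simp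
  nlinarith [norm_nonneg I]

lemma sph_re0 {I : Hq} (h : I ∈ Sph) : I.re = 0 := by
  have hn := sph_norm h
  have hns : normSq I = 1 := by
    have := Quaternion.normSq_eq_norm_mul_self (a := I)
    rw [this, hn]; ring
  have h2 : I ^ 2 = -(((normSq I : ℝ) : Hq)) := by rw [hns]; simpa using (show I ^ 2 = -1 from h)
  exact (Quaternion.sq_eq_neg_normSq).mp h2

lemma sph_ne0 {I : Hq} (h : I ∈ Sph) : I ≠ 0 := by
  intro h0; rw [h0] at h
  have : ((0:Hq)) = -1 := by simpa [Sph, sq] using h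
  simpa using congrArg QuaternionAlgebra.re this

lemma psi_re {I : Hq} (h : I ∈ Sph) (z : ℂ) : (psi I z).re = z.re := by
  simp [psi, sph_re0 h]

lemma smul_I_inj {I : Hq} (hI : I ≠ 0) {a b : ℝ} (h : a • I = b • I) : a = b := by
  have : (a - b) • I = 0 := by rw [sub_smul, h, sub_self]
  rcases smul_eq_zero.mp this with h' | h'
  · linarith [sub_eq_zero.mp (by linarith : a - b = 0)]
  · exact absurd h' hI

lemma psi_eq {I I' : Hq} (hI : I ∈ Sph) (hI' : I' ∈ Sph) {z z' : ℂ}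
    (h : psi I z = psi I' z') : z.re = z'.re ∧ z.im • I = z'.im • I' := by
  have hre : z.re = z'.re := by
    have := congrArg QuaternionAlgebra.re h
    rwa [psi_re hI, psi_re hI'] at this
  refine ⟨hre, ?_⟩
  have hh := h; unfold psi at hh; rw [hre] at hh
  exact add_left_cancel hh

lemma psi_real {I : Hq} (hI : I ∈ Sph) {z : ℂ} (h : psi I z = ((psi I z).re : Hq)) :
    z.im = 0 := by
  rw [psi_re hI] at h
  have : z.im • I = 0 := by
    have := h; unfold psi at this
    have h2 : (z.re : Hq) + z.im • I = (z.re : Hq) + 0 := by rw [add_zero]; exact this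
    exact add_left_cancel h2
  rcases smul_eq_zero.mp this with h' | h'
  · exact h'
  · exact absurd h' (sph_ne0 hI)

lemma psi_star {I : Hq} (z : ℂ) : psi I (star z) = psi (-I) z := by
  unfold psi; simp [Complex.star_def]

lemma sph_neg {I : Hq} (h : I ∈ Sph) : -I ∈ Sph := by
  simpa [Sph, neg_sq] using h

lemma lift_eq_cases {n : ℕ} {I I' : Hq} (hI : I ∈ Sph) (hI' : I' ∈ Sph) {w w' : Fin n → ℂ}
    (h : liftMap I' w' = liftMap I w) :
    (I' = I ∧ w' = w) ∨ (I' = -I ∧ w' = fun k => star (w k)) ∨ (isRealPt w ∧ w' = w) := by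
  have hk : ∀ k, (w' k).re = (w k).re ∧ (w' k).im • I' = (w k).im • I := by
    intro k
    exact psi_eq hI' hI (congrFun h k)
  by_cases hreal : ∀ k, (w k).im = 0
  · right; right
    refine ⟨hreal, funext fun k => ?_⟩
    have h2 := (hk k).2
    rw [hreal k, zero_smul] at h2
    have him : (w' k).im = 0 := by
      rcases smul_eq_zero.mp h2 with h' | h'
      · exact h'
      · exact absurd h' (sph_ne0 hI')
    exact Complex.ext (hk k).1 (him.trans (hreal k).symm)
  · push_neg at hreal
    obtain ⟨k0, hk0⟩ := hreal
    have hw'k0 : (w' k0).im ≠ 0 := by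
      intro h0
      have h2 := (hk k0).2
      rw [h0, zero_smul] at h2
      rcases smul_eq_zero.mp h2.symm with h' | h'
      · exact hk0 h'
      · exact sph_ne0 hI h'
    have hI'eq : I' = ((w' k0).im⁻¹ * (w k0).im) • I := by
      rw [mul_smul, ← (hk k0).2, smul_smul, inv_mul_cancel₀ hw'k0, one_smul]
    set c := (w' k0).im⁻¹ * (w k0).im with hc
    have hcnorm : |c| = 1 := by
      have hn := congrArg norm hI'eq
      rw [norm_smul, sph_norm hI, sph_norm hI', Real.norm_eq_abs, mul_one] at hn
      exact hn.symm
    rcases (abs_eq (by norm_num : (0:ℝ) ≤ 1)).mp hcnorm with hc1 | hc1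
    · left
      have hII : I' = I := by rw [hI'eq, hc1, one_smul]
      refine ⟨hII, funext fun k => ?_⟩
      have h2 := (hk k).2
      rw [hII] at h2
      exact Complex.ext (hk k).1 (smul_I_inj (sph_ne0 hI) h2)
    · right; left
      have hII : I' = -I := by rw [hI'eq, hc1, neg_one_smul]
      refine ⟨hII, funext fun k => ?_⟩
      have h2 := (hk k).2
      rw [hII, smul_neg, ← neg_smul] at h2
      have him : -(w' k).im = (w k).im := smul_I_inj (sph_ne0 hI) h2
      apply Complex.ext
      · simpa [Complex.star_def] using (hk k).1
      · simp only [Complex.star_def, Complex.conj_im]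
        linarith


def Reach {n : ℕ} (Ω : Set (Fin n → Hq)) : Set (Fin n → Hq) :=
  {q | ∃ γ ∈ PathsTo Ω, ∃ I ∈ SUnits Ω γ, liftP γ I 1 = q}

def segPath {n : ℕ} (w z : Fin n → ℂ) : Path w z where
  toFun t := w + (t : ℝ) • (z - w)
  continuous_toFun := by
    apply Continuous.add continuous_const
    exact (continuous_subtype_val.smul continuous_const)
  source' := by simp
  target' := by simp

lemma reach_extend {n : ℕ} {Ω : Set (Fin n → Hq)} {I : Hq} (hI : I ∈ Sph) {w z : Fin n → ℂ}
    (hw : liftMap I w ∈ Reach Ω)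
    (hseg : ∀ t : ℝ, t ∈ Set.Icc (0:ℝ) 1 → liftMap I (w + t • (z - w)) ∈ Ω) :
    liftMap I z ∈ Reach Ω := by
  obtain ⟨γ', ⟨hγ'0, _⟩, I', hI'S, hend⟩ := hw
  -- Step 1: normalize to a path δ with unit I ending at w
  obtain ⟨δ, hδ0, hδΩ, hδ1⟩ :
      ∃ δ : C(unitInterval, Fin n → ℂ), isRealPt (δ 0) ∧ (∀ t, liftP δ I t ∈ Ω) ∧ δ 1 = w := by
    rcases lift_eq_cases hI hI'S.1 hend with ⟨hII, hww⟩ | ⟨hII, hww⟩ | ⟨hwr, hww⟩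
    · exact ⟨γ', hγ'0, by rw [← hII]; exact hI'S.2, hww⟩
    · refine ⟨conjPath γ', ?_, ?_, ?_⟩
      · intro k
        simp only [conjPath, ContinuousMap.coe_mk, Complex.star_def, Complex.conj_im]
        rw [hγ'0 k]; ring
      · intro t
        have : liftP (conjPath γ') I t = liftP γ' I' t := by
          funext k
          show psi I (star (γ' t k)) = psi I' (γ' t k)
          rw [psi_star, ← hII]
        rw [this]; exact hI'S.2 t
      · funext k
        show star (γ' 1 k) = w k
        rw [congrFun hww k]; exact star_star _
    · refine ⟨ContinuousMap.const _ w, ?_, ?_, rfl⟩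
      · intro k; exact hwr k
      · intro t
        have h0 := hseg 0 ⟨le_refl 0, by norm_num⟩
        exact (by simpa using h0 : liftMap I w ∈ Ω)
  -- Step 2: concatenate with the segment from w to z
  set δp : Path (δ 0) w := ⟨δ, rfl, hδ1⟩ with hδp
  set P : Path (δ 0) z := δp.trans (segPath w z) with hP
  refine ⟨P.toContinuousMap, ⟨?_, I, hI, ?_⟩, I, ⟨hI, ?_⟩, ?_⟩
  · show isRealPt (P 0)
    rw [P.source]; exact hδ0
  · intro t
    show liftMap I (P t) ∈ Ω
    rw [hP, Path.trans_apply]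
    split
    · exact hδΩ _
    · next h =>
      apply hseg
      constructor
      · have := t.2.2; push_neg at h; linarith [h]
      · have := t.2.2; linarith [t.2.2]
  · intro t
    show liftMap I (P t) ∈ Ω
    rw [hP, Path.trans_apply]
    split
    · exact hδΩ _
    · next h =>
      apply hseg
      constructor
      · push_neg at h; linarith [h]
      · linarith [t.2.2]
  · show liftMap I (P 1) = liftMap I z
    rw [P.target]


lemma reach_subset {n : ℕ} {Ω : Set (Fin n → Hq)} : Reach Ω ⊆ Ω := by
  rintro q ⟨γ, _, I, hIS, hend⟩
  rw [← hend]; exact hIS.2 1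

lemma reach_ball {n : ℕ} {Ω : Set (Fin n → Hq)} {I : Hq} (hI : I ∈ Sph)
    {z w : Fin n → ℂ} {ε : ℝ} (hε : 0 < ε)
    (hball : Metric.ball z ε ⊆ {u | liftMap I u ∈ Ω}) (hw : w ∈ Metric.ball z ε) :
    (liftMap I w ∈ Reach Ω → liftMap I z ∈ Reach Ω) ∧
    (liftMap I z ∈ Reach Ω → liftMap I w ∈ Reach Ω) := by
  have hz : z ∈ Metric.ball z ε := Metric.mem_ball_self hε
  have hconv := convex_ball z ε
  constructor
  · intro hr
    apply reach_extend hI hr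
    intro t ht
    apply hball
    have : w + t • (z - w) = (1 - t) • w + t • z := by
      rw [smul_sub, sub_smul, one_smul]; abel
    rw [this]
    exact hconv hw hz (by linarith [ht.2]) ht.1 (by ring)
  · intro hr
    apply reach_extend hI hr
    intro t ht
    apply hball
    have : z + t • (w - z) = (1 - t) • z + t • w := by
      rw [smul_sub, sub_smul, one_smul]; abel
    rw [this]
    exact hconv hz hw (by linarith [ht.2]) ht.1 (by ring)


theorem sliceDomain_realPathConnected_aux {n : ℕ} (Ω : Set (Fin n → Hq))
    (hΩ : SliceDomain Ω) (hR : ∃ q ∈ Ω, isRealH q) :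
    RealPathConnected Ω := by
  obtain ⟨⟨hsub, hopen⟩, hconn⟩ := hΩ
  obtain ⟨q₀, hq₀Ω, hq₀R⟩ := hR
  obtain ⟨I₀, hI₀, z₀, hz₀⟩ := hsub hq₀Ω
  have hz₀real : isRealPt z₀ := by
    intro k
    apply psi_real hI₀
    have h1 : psi I₀ (z₀ k) = q₀ k := (congrFun hz₀ k).symm
    rw [h1]
    exact hq₀R k
  have hq₀reach : q₀ ∈ Reach Ω := by
    refine ⟨ContinuousMap.const _ z₀, ⟨hz₀real, I₀, hI₀, ?_⟩, I₀, ⟨hI₀, ?_⟩, ?_⟩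
    · intro t; show liftMap I₀ z₀ ∈ Ω; rw [← hz₀]; exact hq₀Ω
    · intro t; show liftMap I₀ z₀ ∈ Ω; rw [← hz₀]; exact hq₀Ω
    · show liftMap I₀ z₀ = q₀; exact hz₀.symm
  -- claim enough: Ω ⊆ Reach Ω
  suffices hΩR : Ω ⊆ Reach Ω by
    intro q hq; exact hΩR hq
  by_contra hnot
  rw [Set.not_subset] at hnot
  obtain ⟨q₁, hq₁Ω, hq₁not⟩ := hnot
  -- slice-open of Reach Ω
  have hUopen : SliceOpen (Reach Ω) := by
    constructor
    · exact fun q hq => hsub (reach_subset hq)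
    · intro I hI
      rw [Metric.isOpen_iff]
      intro z hz
      obtain ⟨ε, hε, hball⟩ := Metric.isOpen_iff.mp (hopen I hI) z (reach_subset hz)
      exact ⟨ε, hε, fun w hw => (reach_ball hI hε hball hw).2 hz⟩
  have hVopen : SliceOpen (Ω \ Reach Ω) := by
    constructor
    · exact fun q hq => hsub hq.1
    · intro I hI
      rw [Metric.isOpen_iff]
      intro z hz
      obtain ⟨ε, hε, hball⟩ := Metric.isOpen_iff.mp (hopen I hI) z hz.1
      refine ⟨ε, hε, fun w hw => ⟨hball hw, fun hr => hz.2 ?_⟩⟩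
      exact (reach_ball hI hε hball hw).1 hr
  have hcover : Ω ⊆ Reach Ω ∪ (Ω \ Reach Ω) := by
    intro q hq
    by_cases h : q ∈ Reach Ω
    · exact Or.inl h
    · exact Or.inr ⟨hq, h⟩
  obtain ⟨x, ⟨_, hxU⟩, hxV⟩ :=
    hconn (Reach Ω) (Ω \ Reach Ω) hUopen hVopen hcover
      ⟨q₀, hq₀Ω, hq₀reach⟩ ⟨q₁, hq₁Ω, hq₁Ω, hq₁not⟩
  exact hxV.2 hxU

/-- a slice-domain meeting `ℝⁿ` is real-path-connected. -/
theorem sliceDomain_realPathConnected {n : ℕ} (Ω : Set (Fin n → Hq))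
    (hΩ : SliceDomain Ω) (hR : ∃ q ∈ Ω, isRealH q) :
    RealPathConnected Ω := by
  exact sliceDomain_realPathConnected_aux Ω hΩ hR
end
end
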